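/- Let γ > 0 and n ≥ 1 be real numbers, and let p, p̂ ∈ [0,1] satisfy |p̂ − p| ≤ 2·√(p·γ/n) + γ/n. Then |p̂ − p| ≤ 2·√(p̂·γ/n) + 3·γ/n + 4·γ^{3/4}/n^{3/4}. -/
import Mathlib

private lemma sqrt_add_le' (a b : ℝ) (ha : 0 ≤ a) (hb : 0 ≤ b) :
    Real.sqrt (a + b) ≤ Real.sqrt a + Real.sqrt b := by
  have h1 := Real.sq_sqrt ha
  have h2 := Real.sq_sqrt hb
  have h3 := Real.sqrt_nonneg a
  have h4 := Real.sqrt_nonneg b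
  have : a + b ≤ (Real.sqrt a + Real.sqrt b) ^ 2 := by nlinarith
  calc Real.sqrt (a + b) ≤ Real.sqrt ((Real.sqrt a + Real.sqrt b) ^ 2) :=
        Real.sqrt_le_sqrt this
    _ = Real.sqrt a + Real.sqrt b := Real.sqrt_sq (by linarith)

/-- The deterministic conversion inside Lemma 2 of the paper: a confidence interval for an
empirical frequency expressed in terms of the true probability `p` implies one expressed in
terms of the empirical probability `p̂`. -/
theorem stmt12 (γ n p phat : ℝ) (hγ : 0 < γ) (hn : 1 ≤ n)
    (hp0 : 0 ≤ p) (hp1 : p ≤ 1) (hphat0 : 0 ≤ phat) (hphat1 : phat ≤ 1)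
    (h : |phat - p| ≤ 2 * Real.sqrt (p * γ / n) + γ / n) :
    |phat - p| ≤ 2 * Real.sqrt (phat * γ / n) + 3 * γ / n
      + 4 * γ ^ ((3 : ℝ) / 4) / n ^ ((3 : ℝ) / 4) := by
  have hn0 : (0 : ℝ) < n := lt_of_lt_of_le one_pos hn
  have hq : 0 < γ / n := div_pos hγ hn0
  set t := Real.sqrt (γ / n) with htdef
  have ht0 : 0 ≤ t := Real.sqrt_nonneg _
  have ht2 : t ^ 2 = γ / n := Real.sq_sqrt hq.le
  have hst0 : 0 ≤ Real.sqrt t := Real.sqrt_nonneg _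
  have hpq : Real.sqrt (p * γ / n) = Real.sqrt p * t := by
    rw [mul_div_assoc, Real.sqrt_mul hp0]
  have hpq' : Real.sqrt (phat * γ / n) = Real.sqrt phat * t := by
    rw [mul_div_assoc, Real.sqrt_mul hphat0]
  have hsp1 : Real.sqrt p ≤ 1 := Real.sqrt_le_one.mpr hp1
  have hsp0 : 0 ≤ Real.sqrt p := Real.sqrt_nonneg _
  have hsphat0 : 0 ≤ Real.sqrt phat := Real.sqrt_nonneg _
  have habs : p - phat ≤ |phat - p| := by
    rw [abs_sub_comm]; exact le_abs_self _
  have hple : p ≤ phat + 2 * t + t ^ 2 := by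
    have := h
    rw [hpq] at this
    nlinarith
  have hkey : Real.sqrt p ≤ Real.sqrt phat + Real.sqrt (2 * t) + t := by
    calc Real.sqrt p ≤ Real.sqrt (phat + 2 * t + t ^ 2) := Real.sqrt_le_sqrt hple
      _ ≤ Real.sqrt (phat + 2 * t) + Real.sqrt (t ^ 2) :=
          sqrt_add_le' _ _ (by nlinarith) (sq_nonneg t)
      _ ≤ Real.sqrt phat + Real.sqrt (2 * t) + Real.sqrt (t ^ 2) := by
          have := sqrt_add_le' phat (2 * t) hphat0 (by linarith)
          linarith
      _ = Real.sqrt phat + Real.sqrt (2 * t) + t := by rw [Real.sqrt_sq ht0]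
  have h2t : Real.sqrt (2 * t) ≤ 2 * Real.sqrt t := by
    rw [Real.sqrt_mul (by norm_num : (0:ℝ) ≤ 2)]
    have : Real.sqrt 2 ≤ 2 := by
      nlinarith [Real.sq_sqrt (by norm_num : (0:ℝ) ≤ 2), Real.sqrt_nonneg 2]
    nlinarith
  have hst2 : Real.sqrt t ^ 2 = t := Real.sq_sqrt ht0
  have hpow : γ ^ ((3 : ℝ) / 4) / n ^ ((3 : ℝ) / 4) = t * Real.sqrt t := by
    rw [← Real.div_rpow hγ.le hn0.le]
    have e1 : t = (γ / n) ^ ((1 : ℝ) / 2) := Real.sqrt_eq_rpow _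
    have e2 : Real.sqrt t = (γ / n) ^ ((1 : ℝ) / 4) := by
      rw [e1, Real.sqrt_eq_rpow, ← Real.rpow_mul hq.le]
      norm_num
    rw [e2, e1, ← Real.rpow_add hq]
    norm_num
  have hpow4 : 4 * γ ^ ((3 : ℝ) / 4) / n ^ ((3 : ℝ) / 4) = 4 * (t * Real.sqrt t) := by
    rw [mul_div_assoc, hpow]
  rw [hpq', hpow4]
  rw [hpq] at h
  have h1 : 2 * Real.sqrt p * t ≤ 2 * Real.sqrt phat * t + 4 * (t * Real.sqrt t)
      + 2 * t ^ 2 := by nlinarith [mul_le_mul_of_nonneg_right hkey ht0,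
      mul_le_mul_of_nonneg_right h2t ht0]
  have h2 : 3 * γ / n = 3 * t ^ 2 := by rw [ht2]; ring
  rw [h2]
  nlinarith
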